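/- arXiv:math-ph/0511007 — 5 statements merged into one kernel-verified Lean document; each statement's English description precedes it below -/
import Mathlib

section
/- Let f : [0, √d/2] → ℝ be increasing and concave with f(0) ≥ 0. Define ε : ℝ^d → ℝ to be the function periodic with respect to the lattice ℤ^d such that ε(k) = f(|k|) for k ∈ [-1/2, 1/2]^d. Then ε is subadditive. -/
private lemma fsub {M : ℝ} {f : ℝ → ℝ}
    (hmono : MonotoneOn f (Set.Icc 0 M))
    (hconc : ConcaveOn ℝ (Set.Icc 0 M) f)
    (hf0 : 0 ≤ f 0) {a b c : ℝ} (ha : a ∈ Set.Icc 0 M) (hb : b ∈ Set.Icc 0 M)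
    (hc : c ∈ Set.Icc 0 M) (hcab : c ≤ a + b) : f c ≤ f a + f b := by
  have h0 : (0:ℝ) ∈ Set.Icc 0 M := ⟨le_refl _, ha.1.trans ha.2⟩
  have hfa : 0 ≤ f a := hf0.trans (hmono h0 ha ha.1)
  have hfb : 0 ≤ f b := hf0.trans (hmono h0 hb hb.1)
  rcases le_or_gt c a with h | h
  · exact le_add_of_le_of_nonneg (hmono hc ha h) hfb
  rcases le_or_gt c b with h' | h'
  · exact le_add_of_nonneg_of_le hfa (hmono hc hb h')
  have hcpos : 0 < c := (hb.1.trans_lt h')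
  have hfc : 0 ≤ f c := hf0.trans (hmono h0 hc hc.1)
  have key : ∀ x : ℝ, x ∈ Set.Icc 0 M → x ≤ c → (x / c) * f c ≤ f x := by
    intro x hx hxc
    have ht : 0 ≤ x / c := div_nonneg hx.1 hcpos.le
    have ht1 : x / c ≤ 1 := (div_le_one hcpos).mpr hxc
    have := hconc.2 h0 hc (show (0:ℝ) ≤ 1 - x / c by linarith) ht (by ring)
    simp only [smul_eq_mul, mul_zero, zero_add] at this
    calc (x / c) * f c ≤ (1 - x / c) * f 0 + (x / c) * f c := by nlinarith
      _ ≤ f ((x / c) * c) := this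
      _ = f x := by rw [div_mul_cancel₀ _ hcpos.ne']
  have h1 := key a ha h.le
  have h2 := key b hb h'.le
  have h3 : (a / c + b / c) * f c ≤ f a + f b := by linarith
  have hge1 : 1 ≤ a / c + b / c := by
    rw [← add_div, le_div_iff₀ hcpos]; linarith
  nlinarith

/-- Let `f` be increasing and concave on `[0, √d/2]` with `f 0 ≥ 0`.  Let `ε : ℝ^d → ℝ`
be periodic with respect to the lattice `ℤ^d` and satisfy `ε k = f ‖k‖` on the cube
`[-1/2, 1/2]^d`.  Then `ε` is subadditive. -/
theorem stmt_1 (d : ℕ) (f : ℝ → ℝ)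
    (hmono : MonotoneOn f (Set.Icc 0 (Real.sqrt d / 2)))
    (hconc : ConcaveOn ℝ (Set.Icc 0 (Real.sqrt d / 2)) f)
    (hf0 : 0 ≤ f 0)
    (ε : EuclideanSpace ℝ (Fin d) → ℝ)
    (hper : ∀ (k m : EuclideanSpace ℝ (Fin d)),
      (∀ i, ∃ z : ℤ, m i = (z : ℝ)) → ε (k + m) = ε k)
    (hcube : ∀ k : EuclideanSpace ℝ (Fin d),
      (∀ i, |k i| ≤ 1 / 2) → ε k = f ‖k‖)
    (k₁ k₂ : EuclideanSpace ℝ (Fin d)) :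
    ε (k₁ + k₂) ≤ ε k₁ + ε k₂ := by
  classical
  set r : EuclideanSpace ℝ (Fin d) → EuclideanSpace ℝ (Fin d) :=
    fun k => WithLp.toLp 2 (fun i => k i - (round (k i) : ℝ) : Fin d → ℝ) with hr
  have hr_apply : ∀ k i, r k i = k i - (round (k i) : ℝ) := fun k i => rfl
  have hr_small : ∀ k i, |r k i| ≤ 1 / 2 := fun k i => abs_sub_round (k i)
  have hr_le : ∀ k i, |r k i| ≤ |k i| := by
    intro k i
    simpa using round_le (k i) 0
  have hεr : ∀ k, ε k = ε (r k) := by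
    intro k
    have hk : k = r k + (show EuclideanSpace ℝ (Fin d) from WithLp.toLp 2 (fun i => (round (k i) : ℝ))) := by
      ext i
      show k i = r k i + (round (k i) : ℝ)
      rw [hr_apply]; ring
    have h := hper (r k) (show EuclideanSpace ℝ (Fin d) from WithLp.toLp 2 (fun i => (round (k i) : ℝ)))
      (fun i => ⟨round (k i), rfl⟩)
    rw [← hk] at h
    exact h
  have hεf : ∀ k, ε k = f ‖r k‖ := fun k => (hεr k).trans (hcube _ (hr_small k))
  have hnorm_le : ∀ x y : EuclideanSpace ℝ (Fin d), (∀ i, |x i| ≤ |y i|) → ‖x‖ ≤ ‖y‖ := by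
    intro x y h
    rw [EuclideanSpace.norm_eq, EuclideanSpace.norm_eq]
    apply Real.sqrt_le_sqrt
    exact Finset.sum_le_sum fun i _ => pow_le_pow_left₀ (abs_nonneg _) (h i) 2
  have hmem : ∀ k, ‖r k‖ ∈ Set.Icc 0 (Real.sqrt d / 2) := by
    intro k
    refine ⟨norm_nonneg _, ?_⟩
    rw [EuclideanSpace.norm_eq]
    have h1 : ∑ i, |r k i| ^ 2 ≤ (d : ℝ) * (1/2)^2 := by
      calc ∑ i, |r k i| ^ 2 ≤ ∑ _i : Fin d, ((1:ℝ)/2)^2 :=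
            Finset.sum_le_sum fun i _ => pow_le_pow_left₀ (abs_nonneg _) (hr_small k i) 2
        _ = (d : ℝ) * (1/2)^2 := by simp [Finset.sum_const, Finset.card_univ]
    calc Real.sqrt (∑ i, |r k i| ^ 2) ≤ Real.sqrt ((d : ℝ) * (1/2)^2) :=
          Real.sqrt_le_sqrt h1
      _ = Real.sqrt d * (1/2) := by
          rw [Real.sqrt_mul (Nat.cast_nonneg d), Real.sqrt_sq (by norm_num)]
      _ = Real.sqrt d / 2 := by ring
  have hrinv : r (k₁ + k₂) = r (r k₁ + r k₂) := by
    ext i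
    have h2 : (r k₁ + r k₂ : EuclideanSpace ℝ (Fin d)) i
        = (k₁ + k₂ : EuclideanSpace ℝ (Fin d)) i - ((round (k₁ i) + round (k₂ i) : ℤ) : ℝ) := by
      show r k₁ i + r k₂ i = (k₁ i + k₂ i) - _
      rw [hr_apply, hr_apply]; push_cast; ring
    rw [hr_apply, hr_apply, h2, round_sub_intCast]
    push_cast
    ring
  have hkey : ‖r (k₁ + k₂)‖ ≤ ‖r k₁‖ + ‖r k₂‖ := by
    calc ‖r (k₁ + k₂)‖ = ‖r (r k₁ + r k₂)‖ := by rw [hrinv]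
      _ ≤ ‖r k₁ + r k₂‖ := hnorm_le _ _ fun i => hr_le _ i
      _ ≤ ‖r k₁‖ + ‖r k₂‖ := norm_add_le _ _
  rw [hεf k₁, hεf k₂, hεf (k₁ + k₂)]
  exact fsub hmono hconc hf0 (hmem k₁) (hmem k₂) (hmem (k₁ + k₂)) hkey
end

section
/- With the setup of the static Green's function: H self-adjoint, HΨ = EΨ, H − E ≥ 0, A and B operators with AΨ, A*Ψ, BΨ, B*Ψ ⊥ Ψ, the identity ⟨[A*,B]⟩ = ⟨⟨A*,[H,B]⟩⟩ holds, and consequently |⟨[A*,B]⟩|² ≤ ⟨⟨A*,A⟩⟩·⟨[B*,[H,B]]⟩. -/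
open ContinuousLinearMap

/-- Cauchy–Schwarz inequality for a positive self-adjoint operator. -/
lemma aux_cs {V : Type*} [NormedAddCommGroup V] [InnerProductSpace ℂ V]
    [CompleteSpace V] (R : V →L[ℂ] V) (hR : IsSelfAdjoint R)
    (hRpos : ∀ x : V, 0 ≤ ((inner ℂ x (R x) : ℂ)).re) (x y : V) :
    ‖(inner ℂ x (R y) : ℂ)‖ ^ 2 ≤ ((inner ℂ x (R x) : ℂ)).re * ((inner ℂ y (R y) : ℂ)).re := by
  have hRsym : ∀ a b : V, (inner ℂ (R a) b : ℂ) = inner ℂ a (R b) := by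
    intro a b
    conv_lhs => rw [← isSelfAdjoint_iff'.mp hR]
    exact adjoint_inner_left R b a
  set p : ℂ := inner ℂ x (R y) with hp
  by_cases hp0 : p = 0
  · rw [hp0]
    simp only [norm_zero, ne_eq, OfNat.ofNat_ne_zero, not_false_eq_true, zero_pow]
    exact mul_nonneg (hRpos x) (hRpos y)
  · have hyx : (inner ℂ y (R x) : ℂ) = (starRingEnd ℂ) p := by
      rw [← hRsym, ← inner_conj_symm, ← hp]
    set a : ℝ := ((inner ℂ x (R x) : ℂ)).re with ha
    set d : ℝ := ((inner ℂ y (R y) : ℂ)).re with hd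
    have key : ∀ t : ℝ, 0 ≤ (‖p‖ ^ 2 * d) * (t * t) + (2 * ‖p‖ ^ 2) * t + a := by
      intro t
      have h0 := hRpos (x + ((t : ℂ) * (starRingEnd ℂ) p) • y)
      set μ : ℂ := (t : ℂ) * (starRingEnd ℂ) p with hμ
      have hexp : (inner ℂ (x + μ • y) (R (x + μ • y)) : ℂ)
          = inner ℂ x (R x) + μ * p + (starRingEnd ℂ) μ * (starRingEnd ℂ) p
            + ((starRingEnd ℂ) μ * μ) * inner ℂ y (R y) := by
        rw [map_add, map_smul, inner_add_left, inner_add_right, inner_add_right,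
          inner_smul_left, inner_smul_right, inner_smul_left, inner_smul_right, hyx, ← hp]
        ring
      have hmp : μ * p = ((t * ‖p‖ ^ 2 : ℝ) : ℂ) := by
        rw [hμ, mul_assoc, RCLike.conj_mul]
        norm_cast
        exact (Complex.ofReal_mul t (‖p‖ ^ 2)).symm
      have hμp : (μ * p).re = t * ‖p‖ ^ 2 := by rw [hmp, Complex.ofReal_re]
      have hcc : ((starRingEnd ℂ) μ * (starRingEnd ℂ) p).re = t * ‖p‖ ^ 2 := by
        rw [← map_mul, Complex.conj_re, hμp]
      have hnm : (‖μ‖ : ℝ) ^ 2 = t ^ 2 * ‖p‖ ^ 2 := by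
        rw [hμ, norm_mul, RCLike.norm_conj, mul_pow]
        norm_num [Complex.norm_real]
      have hμμ : (((starRingEnd ℂ) μ * μ) * (inner ℂ y (R y) : ℂ)).re
          = t ^ 2 * ‖p‖ ^ 2 * d := by
        have h1 : (starRingEnd ℂ) μ * μ = ((‖μ‖ ^ 2 : ℝ) : ℂ) := by
          rw [RCLike.conj_mul]; norm_cast
        rw [h1, hnm, Complex.re_ofReal_mul, ← hd]
      have hfin : (inner ℂ (x + μ • y) (R (x + μ • y)) : ℂ).re
          = a + t * ‖p‖ ^ 2 + t * ‖p‖ ^ 2 + t ^ 2 * ‖p‖ ^ 2 * d := by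
        rw [hexp]
        simp only [Complex.add_re]
        rw [hμp, hcc, hμμ, ← ha]
      rw [hfin] at h0
      nlinarith [h0]
    have hdisc := discrim_le_zero key
    rw [discrim] at hdisc
    have hpn : 0 < ‖p‖ ^ 2 := pow_pos (norm_pos_iff.mpr hp0) 2
    nlinarith [hdisc, hpn]

set_option maxHeartbeats 1600000 in
/-- With `H` self-adjoint, `HΨ = EΨ`, `H − E ≥ 0`, reduced resolvent `R = (H−E)⁻¹` on
`{Ψ}^⊥`, and `AΨ, A*Ψ, BΨ, B*Ψ ⊥ Ψ`, one has the identity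
`⟨[A*,B]⟩ = ⟨⟨A*,[H,B]⟩⟩` and consequently
`|⟨[A*,B]⟩|² ≤ ⟨⟨A*,A⟩⟩ · ⟨[B*,[H,B]]⟩`. -/
theorem stmt_10 {V : Type*} [NormedAddCommGroup V] [InnerProductSpace ℂ V]
    [CompleteSpace V] (H R A B : V →L[ℂ] V) (E : ℝ) (Ψ : V) (hΨ : ‖Ψ‖ = 1)
    (hH : IsSelfAdjoint H) (hground : H Ψ = (E : ℂ) • Ψ)
    (hpos : ∀ x : V, 0 ≤ ((inner ℂ x (H x) : ℂ)).re - E * ‖x‖ ^ 2)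
    (hR : IsSelfAdjoint R) (hRΨ : R Ψ = 0)
    (hRres : ∀ x : V, (H - (E : ℂ) • (1 : V →L[ℂ] V)) (R x) = x - (inner ℂ Ψ x : ℂ) • Ψ)
    (hA : (inner ℂ Ψ (A Ψ) : ℂ) = 0) (hA' : (inner ℂ Ψ ((adjoint A) Ψ) : ℂ) = 0)
    (hB : (inner ℂ Ψ (B Ψ) : ℂ) = 0) (hB' : (inner ℂ Ψ ((adjoint B) Ψ) : ℂ) = 0) :
    ((inner ℂ Ψ (((adjoint A) * B - B * (adjoint A)) Ψ) : ℂ) =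
      (inner ℂ Ψ (((adjoint A) * R * (H * B - B * H)) Ψ) : ℂ) +
      (inner ℂ Ψ (((H * B - B * H) * R * (adjoint A)) Ψ) : ℂ)) ∧
    ‖(inner ℂ Ψ (((adjoint A) * B - B * (adjoint A)) Ψ) : ℂ)‖ ^ 2 ≤
      ((inner ℂ Ψ (((adjoint A) * R * A) Ψ) : ℂ) + (inner ℂ Ψ ((A * R * (adjoint A)) Ψ) : ℂ)).re *
      ((inner ℂ Ψ (((adjoint B) * (H * B - B * H) - (H * B - B * H) * (adjoint B)) Ψ) : ℂ)).re := by
  set K : V →L[ℂ] V := H - (E : ℂ) • (1 : V →L[ℂ] V) with hK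
  have hKapp : ∀ x : V, K x = H x - (E : ℂ) • x := by
    intro x; rfl
  have hHsym : ∀ x y : V, (inner ℂ (H x) y : ℂ) = inner ℂ x (H y) := by
    intro x y
    conv_lhs => rw [← isSelfAdjoint_iff'.mp hH]
    exact adjoint_inner_left H y x
  have hRsym : ∀ x y : V, (inner ℂ (R x) y : ℂ) = inner ℂ x (R y) := by
    intro x y
    conv_lhs => rw [← isSelfAdjoint_iff'.mp hR]
    exact adjoint_inner_left R y x
  have hKsym : ∀ x y : V, (inner ℂ (K x) y : ℂ) = inner ℂ x (K y) := by
    intro x y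
    rw [hKapp, hKapp, inner_sub_left, inner_sub_right, hHsym, inner_smul_left, inner_smul_right,
      Complex.conj_ofReal]
  have hRΨ' : ∀ x : V, (inner ℂ Ψ (R x) : ℂ) = 0 := by
    intro x
    rw [← hRsym, hRΨ, inner_zero_left]
  have hRK : ∀ x : V, R (K x) = x - (inner ℂ Ψ x : ℂ) • Ψ := by
    intro x
    apply ext_inner_left ℂ
    intro w
    rw [← hRsym, ← hKsym, hRres w, inner_sub_left, inner_sub_right, inner_smul_left,
      inner_smul_right, inner_conj_symm]
    ring
  have hKpos : ∀ y : V, 0 ≤ ((inner ℂ y (K y) : ℂ)).re := by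
    intro y
    have h2 : ((inner ℂ y (K y) : ℂ)).re = ((inner ℂ y (H y) : ℂ)).re - E * ‖y‖ ^ 2 := by
      have hyy : (inner ℂ y y : ℂ) = ((‖y‖ ^ 2 : ℝ) : ℂ) := by
        rw [inner_self_eq_norm_sq_to_K]; norm_cast
      rw [hKapp, inner_sub_right, inner_smul_right, hyy, Complex.sub_re,
        Complex.re_ofReal_mul, Complex.ofReal_re]
    rw [h2]
    linarith [hpos y]
  have hRpos : ∀ x : V, 0 ≤ ((inner ℂ x (R x) : ℂ)).re := by
    intro x
    have hconj : ((inner ℂ x (R x) : ℂ)).re = ((inner ℂ (R x) x : ℂ)).re := by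
      rw [← inner_conj_symm x (R x), Complex.conj_re]
    rw [hconj]
    set y := R x with hy
    have hx2 : x = K y + (inner ℂ Ψ x : ℂ) • Ψ := by
      rw [hy, hRres x]; simp
    rw [hx2, inner_add_right, inner_smul_right]
    have hyΨ : (inner ℂ y Ψ : ℂ) = 0 := by
      rw [hy, hRsym, hRΨ, inner_zero_right]
    rw [hyΨ, mul_zero, add_zero]
    exact hKpos y
  -- key vectors
  set u : V := A Ψ with hu
  set u' : V := (adjoint A) Ψ with hu'
  set b : V := B Ψ with hb
  set b' : V := (adjoint B) Ψ with hb'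
  set v : V := K b with hv
  set v' : V := K b' with hv'
  have hCΨ : (H * B - B * H) Ψ = v := by
    have h1 : (H * B - B * H) Ψ = H (B Ψ) - B (H Ψ) := rfl
    rw [hv, hKapp, h1, hground, map_smul, hb]
  have hCad : ∀ z : V, (inner ℂ Ψ ((H * B - B * H) z) : ℂ) = -(inner ℂ v' z : ℂ) := by
    intro z
    have e1 : (inner ℂ Ψ (H (B z)) : ℂ) = (E : ℂ) * inner ℂ Ψ (B z) := by
      rw [← hHsym, hground, inner_smul_left, Complex.conj_ofReal]
    have e2 : ∀ w : V, (inner ℂ Ψ (B w) : ℂ) = inner ℂ b' w := by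
      intro w; rw [hb']; exact (adjoint_inner_left B w Ψ).symm
    have h1 : (H * B - B * H) z = H (B z) - B (H z) := rfl
    rw [h1, inner_sub_right, e1, e2 z, e2 (H z), ← hHsym b' z, hv', hKapp, inner_sub_left,
      inner_smul_left, Complex.conj_ofReal]
    ring
  have hRvb : R v = b := by
    rw [hv, hRK, hB]; simp
  have hRv'b' : R v' = b' := by
    rw [hv', hRK, hB']; simp
  -- part 1 pieces
  have hterm1 : (inner ℂ Ψ (((adjoint A) * R * (H * B - B * H)) Ψ) : ℂ) = inner ℂ u b := by
    have h1 : ((adjoint A) * R * (H * B - B * H)) Ψ = (adjoint A) (R ((H * B - B * H) Ψ)) := rfl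
    rw [h1, hCΨ, hRvb, hu, hb]
    exact adjoint_inner_right A Ψ (B Ψ)
  have hterm2 : (inner ℂ Ψ (((H * B - B * H) * R * (adjoint A)) Ψ) : ℂ) = -(inner ℂ b' u' : ℂ) := by
    have h1 : ((H * B - B * H) * R * (adjoint A)) Ψ = (H * B - B * H) (R ((adjoint A) Ψ)) := rfl
    rw [h1, ← hu', hCad (R u'), ← hRsym v' u', hRv'b']
  have hlhs : (inner ℂ Ψ (((adjoint A) * B - B * (adjoint A)) Ψ) : ℂ)
      = (inner ℂ u b : ℂ) - inner ℂ b' u' := by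
    have h1 : ((adjoint A) * B - B * (adjoint A)) Ψ = (adjoint A) (B Ψ) - B ((adjoint A) Ψ) := rfl
    rw [h1, inner_sub_right]
    have e3 : (inner ℂ Ψ ((adjoint A) (B Ψ)) : ℂ) = inner ℂ u b := by
      rw [hu, hb]; exact adjoint_inner_right A Ψ (B Ψ)
    have e4 : (inner ℂ Ψ (B ((adjoint A) Ψ)) : ℂ) = inner ℂ b' u' := by
      rw [hb', hu']; exact (adjoint_inner_left B ((adjoint A) Ψ) Ψ).symm
    rw [e3, e4]
  have part1 : (inner ℂ Ψ (((adjoint A) * B - B * (adjoint A)) Ψ) : ℂ) =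
      (inner ℂ Ψ (((adjoint A) * R * (H * B - B * H)) Ψ) : ℂ) +
      (inner ℂ Ψ (((H * B - B * H) * R * (adjoint A)) Ψ) : ℂ) := by
    rw [hterm1, hterm2, hlhs]; ring
  refine ⟨part1, ?_⟩
  -- part 2
  have hS : ((inner ℂ Ψ (((adjoint A) * R * A) Ψ) : ℂ) + (inner ℂ Ψ ((A * R * (adjoint A)) Ψ) : ℂ))
      = (inner ℂ u (R u) : ℂ) + inner ℂ u' (R u') := by
    have h1 : ((adjoint A) * R * A) Ψ = (adjoint A) (R (A Ψ)) := rfl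
    have h2 : (A * R * (adjoint A)) Ψ = A (R ((adjoint A) Ψ)) := rfl
    rw [h1, h2, ← hu, ← hu', adjoint_inner_right A Ψ (R u), ← hu,
      ← adjoint_inner_left A (R u') Ψ, ← hu']
  have hT : (inner ℂ Ψ (((adjoint B) * (H * B - B * H) - (H * B - B * H) * (adjoint B)) Ψ) : ℂ)
      = (inner ℂ b v : ℂ) + inner ℂ v' b' := by
    have h1 : ((adjoint B) * (H * B - B * H) - (H * B - B * H) * (adjoint B)) Ψ
        = (adjoint B) ((H * B - B * H) Ψ) - (H * B - B * H) ((adjoint B) Ψ) := rfl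
    rw [h1, inner_sub_right, hCΨ, ← hb', hCad b', adjoint_inner_right B Ψ v, ← hb]
    ring
  have hub : (inner ℂ u b : ℂ) = inner ℂ u (R v) := by rw [hRvb]
  have hbu' : (inner ℂ b' u' : ℂ) = (starRingEnd ℂ) (inner ℂ u' (R v') : ℂ) := by
    rw [hRv'b', inner_conj_symm]
  have hcs1 := aux_cs R hR hRpos u v
  have hcs2 := aux_cs R hR hRpos u' v'
  have hcv : ((inner ℂ v (R v) : ℂ)).re = ((inner ℂ b v : ℂ)).re := by
    rw [← hRsym v v, hRvb]
  have hcv' : ((inner ℂ v' (R v') : ℂ)).re = ((inner ℂ v' b' : ℂ)).re := by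
    rw [hRv'b']
  rw [hlhs, hS, hT]
  set x1 : ℝ := ‖(inner ℂ u (R v) : ℂ)‖ with hx1e
  set x2 : ℝ := ‖(inner ℂ u' (R v') : ℂ)‖ with hx2e
  set a1 : ℝ := ((inner ℂ u (R u) : ℂ)).re with ha1e
  set a2 : ℝ := ((inner ℂ u' (R u') : ℂ)).re with ha2e
  set c1 : ℝ := ((inner ℂ v (R v) : ℂ)).re with hc1e
  set c2 : ℝ := ((inner ℂ v' (R v') : ℂ)).re with hc2e
  have ha1 : 0 ≤ a1 := hRpos u
  have ha2 : 0 ≤ a2 := hRpos u'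
  have hc1 : 0 ≤ c1 := hRpos v
  have hc2 : 0 ≤ c2 := hRpos v'
  have hx1 : 0 ≤ x1 := norm_nonneg _
  have hx2 : 0 ≤ x2 := norm_nonneg _
  have hgbound : ‖(inner ℂ u b : ℂ) - (inner ℂ b' u' : ℂ)‖ ≤ x1 + x2 := by
    rw [hub, hbu', hx1e, hx2e]
    refine le_trans (norm_sub_le _ _) ?_
    exact le_of_eq (by rw [RCLike.norm_conj])
  have hre : (((inner ℂ u (R u) : ℂ)) + (inner ℂ u' (R u') : ℂ)).re = a1 + a2 := by
    rw [Complex.add_re, ha1e, ha2e]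
  have hre2 : (((inner ℂ b v : ℂ)) + (inner ℂ v' b' : ℂ)).re = c1 + c2 := by
    rw [Complex.add_re, hcv, hcv']
  rw [hre, hre2]
  have h12 : x1 ^ 2 * x2 ^ 2 ≤ (a1 * c1) * (a2 * c2) :=
    mul_le_mul hcs1 hcs2 (sq_nonneg x2) (mul_nonneg ha1 hc1)
  have h2ab : 2 * (x1 * x2) ≤ a1 * c2 + a2 * c1 := by
    have hp0 : 0 ≤ a1 * c2 := mul_nonneg ha1 hc2
    have hq0 : 0 ≤ a2 * c1 := mul_nonneg ha2 hc1
    have e1 : x1 * x2 ≤ Real.sqrt ((a1 * c2) * (a2 * c1)) := by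
      calc x1 * x2 = Real.sqrt ((x1 * x2) ^ 2) := (Real.sqrt_sq (mul_nonneg hx1 hx2)).symm
        _ ≤ Real.sqrt ((a1 * c2) * (a2 * c1)) := Real.sqrt_le_sqrt (by nlinarith [h12])
    have e2 : Real.sqrt ((a1 * c2) * (a2 * c1)) ≤ (a1 * c2 + a2 * c1) / 2 := by
      have h := two_mul_le_add_sq (Real.sqrt (a1 * c2)) (Real.sqrt (a2 * c1))
      rw [Real.sq_sqrt hp0, Real.sq_sqrt hq0] at h
      rw [Real.sqrt_mul hp0]
      linarith
    linarith
  have hmain : (x1 + x2) ^ 2 ≤ (a1 + a2) * (c1 + c2) := by nlinarith [hcs1, hcs2, h2ab]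
  calc ‖(inner ℂ u b : ℂ) - (inner ℂ b' u' : ℂ)‖ ^ 2 ≤ (x1 + x2) ^ 2 :=
        pow_le_pow_left₀ (norm_nonneg _) hgbound 2
    _ ≤ (a1 + a2) * (c1 + c2) := hmain
end

section
/- (Feynman bound) Let H be self-adjoint and bounded below with ground state Ψ, HΨ = EΨ. Let A be an operator and let ε := inf spec(H restricted to the smallest H-invariant closed subspace containing AΨ and A*Ψ) − E. Then ε ≤ ⟨[A*,[H,A]]⟩ / ⟨[A*,A]₊⟩, provided ⟨[A*,A]₊⟩ > 0. -/
open ContinuousLinearMap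

lemma aux_glb {V : Type*} [NormedAddCommGroup V] [InnerProductSpace ℂ V]
    (H : V →L[ℂ] V) (E ε : ℝ) (K : Submodule ℂ V)
    (hε : IsGLB {r : ℝ | ∃ x ∈ K, ‖x‖ = 1 ∧ r = ((inner ℂ x (H x) : ℂ)).re - E} ε) :
    ∀ x ∈ K, ε * ‖x‖ ^ 2 ≤ ((inner ℂ x (H x) : ℂ)).re - E * ‖x‖ ^ 2 := by
  intro x hx
  by_cases hx0 : x = 0
  · simp [hx0]
  · have hn : (0 : ℝ) < ‖x‖ := norm_pos_iff.mpr hx0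
    set u : V := ((‖x‖⁻¹ : ℝ) : ℂ) • x with hu
    have hun : ‖u‖ = 1 := by
      simp [hu, norm_smul, inv_mul_cancel₀ hn.ne']
    have huK : u ∈ K := K.smul_mem _ hx
    have hre : ((inner ℂ u (H u) : ℂ)).re = ‖x‖⁻¹ * ‖x‖⁻¹ * ((inner ℂ x (H x) : ℂ)).re := by
      simp [hu, inner_smul_left, inner_smul_right, map_smul, mul_assoc]
      exact Or.inl (mul_comm _ _)
    have hle : ε ≤ ((inner ℂ u (H u) : ℂ)).re - E := hε.1 ⟨u, huK, hun, rfl⟩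
    rw [hre] at hle
    have h2 := mul_le_mul_of_nonneg_left hle (le_of_lt (by positivity : (0:ℝ) < ‖x‖^2))
    calc ε * ‖x‖ ^ 2 = ‖x‖ ^ 2 * ε := by ring
    _ ≤ ‖x‖ ^ 2 * (‖x‖⁻¹ * ‖x‖⁻¹ * ((inner ℂ x (H x) : ℂ)).re - E) := h2
    _ = ((inner ℂ x (H x) : ℂ)).re - E * ‖x‖ ^ 2 := by
        field_simp

/-- Feynman bound: `H` self-adjoint with ground state `Ψ`, `HΨ = EΨ`; `K` is the smallest
closed `H`-invariant subspace containing `AΨ` and `A*Ψ`; `ε = inf spec(H|_K) − E`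
(expressed via the infimum of the Rayleigh quotients on `K`).  Then
`ε ≤ ⟨[A*,[H,A]]⟩ / ⟨[A*,A]₊⟩`, provided `⟨[A*,A]₊⟩ > 0`. -/
theorem stmt_11 {V : Type*} [NormedAddCommGroup V] [InnerProductSpace ℂ V]
    [CompleteSpace V] (H A : V →L[ℂ] V) (hH : IsSelfAdjoint H) (E ε : ℝ)
    (Ψ : V) (hΨ : ‖Ψ‖ = 1) (hground : H Ψ = (E : ℂ) • Ψ)
    (K : Submodule ℂ V) (hKclosed : IsClosed (K : Set V))
    (hKA : A Ψ ∈ K) (hKA' : (adjoint A) Ψ ∈ K) (hKinv : ∀ x ∈ K, H x ∈ K)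
    (hKmin : ∀ K' : Submodule ℂ V, IsClosed (K' : Set V) → A Ψ ∈ K' →
      (adjoint A) Ψ ∈ K' → (∀ x ∈ K', H x ∈ K') → K ≤ K')
    (hε : IsGLB {r : ℝ | ∃ x ∈ K, ‖x‖ = 1 ∧ r = ((inner ℂ x (H x) : ℂ)).re - E} ε)
    (hden : 0 < ((inner ℂ Ψ (((adjoint A) * A + A * (adjoint A)) Ψ) : ℂ)).re) :
    ε ≤ ((inner ℂ Ψ (((adjoint A) * (H * A - A * H) - (H * A - A * H) * (adjoint A)) Ψ) : ℂ)).re /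
      ((inner ℂ Ψ (((adjoint A) * A + A * (adjoint A)) Ψ) : ℂ)).re := by
  have hHadj : adjoint H = H := hH
  -- denominator identity
  have hDa : (inner ℂ Ψ ((adjoint A * A) Ψ) : ℂ) = (‖A Ψ‖ ^ 2 : ℝ) := by
    rw [mul_apply_eq_comp, adjoint_inner_right]
    exact_mod_cast inner_self_eq_norm_sq_to_K (𝕜 := ℂ) (A Ψ)
  have hDb : (inner ℂ Ψ ((A * adjoint A) Ψ) : ℂ) = (‖(adjoint A) Ψ‖ ^ 2 : ℝ) := by
    rw [mul_apply_eq_comp, ← adjoint_inner_left]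
    exact_mod_cast inner_self_eq_norm_sq_to_K (𝕜 := ℂ) ((adjoint A) Ψ)
  have hD : ((inner ℂ Ψ (((adjoint A) * A + A * (adjoint A)) Ψ) : ℂ)).re
      = ‖A Ψ‖ ^ 2 + ‖(adjoint A) Ψ‖ ^ 2 := by
    simp only [add_apply, inner_add_right, hDa, hDb]
    simp [← Complex.ofReal_pow]
  -- numerator identity
  have hHΨ_left : ∀ y : V, (inner ℂ Ψ (H y) : ℂ) = (E : ℂ) * inner ℂ Ψ y := by
    intro y
    rw [← adjoint_inner_left, hHadj, hground, inner_smul_left]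
    simp
  have hN : ((inner ℂ Ψ (((adjoint A) * (H * A - A * H) - (H * A - A * H) * (adjoint A)) Ψ) : ℂ)).re
      = (((inner ℂ (A Ψ) (H (A Ψ)) : ℂ)).re - E * ‖A Ψ‖ ^ 2)
        + (((inner ℂ ((adjoint A) Ψ) (H ((adjoint A) Ψ)) : ℂ)).re - E * ‖(adjoint A) Ψ‖ ^ 2) := by
    have h1 : (inner ℂ Ψ (((adjoint A) * (H * A - A * H)) Ψ) : ℂ)
        = inner ℂ (A Ψ) (H (A Ψ)) - (E : ℂ) * (‖A Ψ‖ ^ 2 : ℝ) := by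
      rw [mul_apply_eq_comp, adjoint_inner_right]
      simp only [sub_apply, mul_apply_eq_comp, inner_sub_right, hground, map_smul, inner_smul_right]
      congr 1
      rw [inner_self_eq_norm_sq_to_K (𝕜 := ℂ) (A Ψ)]
      push_cast
      try ring
      try norm_cast
      try exact (RCLike.ofReal_mul _ _).symm
      try exact RCLike.ofReal_mul _ _
    have h2 : (inner ℂ Ψ (((H * A - A * H) * (adjoint A)) Ψ) : ℂ)
        = (E : ℂ) * (‖(adjoint A) Ψ‖ ^ 2 : ℝ) - inner ℂ ((adjoint A) Ψ) (H ((adjoint A) Ψ)) := by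
      rw [mul_apply_eq_comp, sub_apply, mul_apply_eq_comp, mul_apply_eq_comp, inner_sub_right, hHΨ_left,
        ← adjoint_inner_left A, ← adjoint_inner_left A]
      congr 2
      rw [inner_self_eq_norm_sq_to_K (𝕜 := ℂ)]
      push_cast
      try ring
      try norm_cast
      try exact (RCLike.ofReal_mul _ _).symm
      try exact RCLike.ofReal_mul _ _
    rw [sub_apply, inner_sub_right, h1, h2]
    simp [← Complex.ofReal_pow]
    push_cast
    ring
  rw [hD] at hden
  rw [hN, hD, le_div_iff₀ hden]
  have ha := aux_glb H E ε K hε (A Ψ) hKA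
  have hb := aux_glb H E ε K hε ((adjoint A) Ψ) hKA'
  linarith
end

section
/- (Wagner-type bound) With H, Ψ, E, ε as in the Feynman bound setup and additionally AΨ, A*Ψ ⊥ Ψ, one has ε² ≤ ⟨[A*,[H,A]]⟩ / ⟨⟨A*,A⟩⟩, where ⟨⟨A*,A⟩⟩ := ⟨A*(H−E)⁻¹A⟩ + ⟨A(H−E)⁻¹A*⟩ with the reduced resolvent. -/
set_option maxHeartbeats 1000000


open ContinuousLinearMap

/-- Wagner-type bound: with `H` self-adjoint, `HΨ = EΨ`, `H − E ≥ 0`, reduced resolvent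
`R = (H−E)⁻¹` on `{Ψ}^⊥`, `AΨ, A*Ψ ⊥ Ψ`, and `ε = inf spec(H|_K) − E` where `K` is the
smallest closed `H`-invariant subspace containing `AΨ` and `A*Ψ`, one has
`ε² ≤ ⟨[A*,[H,A]]⟩ / ⟨⟨A*,A⟩⟩`. -/
theorem stmt_12 {V : Type*} [NormedAddCommGroup V] [InnerProductSpace ℂ V]
    [CompleteSpace V] (H R A : V →L[ℂ] V) (hH : IsSelfAdjoint H) (E ε : ℝ)
    (Ψ : V) (hΨ : ‖Ψ‖ = 1) (hground : H Ψ = (E : ℂ) • Ψ)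
    (hpos : ∀ x : V, 0 ≤ ((inner ℂ x (H x) : ℂ)).re - E * ‖x‖ ^ 2)
    (hR : IsSelfAdjoint R) (hRΨ : R Ψ = 0)
    (hRres : ∀ x : V, (H - (E : ℂ) • (1 : V →L[ℂ] V)) (R x) = x - (inner ℂ Ψ x : ℂ) • Ψ)
    (hA : (inner ℂ Ψ (A Ψ) : ℂ) = 0) (hA' : (inner ℂ Ψ ((adjoint A) Ψ) : ℂ) = 0)
    (K : Submodule ℂ V) (hKclosed : IsClosed (K : Set V))
    (hKA : A Ψ ∈ K) (hKA' : (adjoint A) Ψ ∈ K) (hKinv : ∀ x ∈ K, H x ∈ K)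
    (hKmin : ∀ K' : Submodule ℂ V, IsClosed (K' : Set V) → A Ψ ∈ K' →
      (adjoint A) Ψ ∈ K' → (∀ x ∈ K', H x ∈ K') → K ≤ K')
    (hε : IsGLB {r : ℝ | ∃ x ∈ K, ‖x‖ = 1 ∧ r = ((inner ℂ x (H x) : ℂ)).re - E} ε)
    (hden : 0 < ((inner ℂ Ψ (((adjoint A) * R * A) Ψ) : ℂ) +
      (inner ℂ Ψ ((A * R * (adjoint A)) Ψ) : ℂ)).re) :
    ε ^ 2 ≤ ((inner ℂ Ψ (((adjoint A) * (H * A - A * H) - (H * A - A * H) * (adjoint A)) Ψ) : ℂ)).re /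
      ((inner ℂ Ψ (((adjoint A) * R * A) Ψ) : ℂ) + (inner ℂ Ψ ((A * R * (adjoint A)) Ψ) : ℂ)).re := by
  haveI : CompleteSpace K := hKclosed.completeSpace_coe
  -- symmetry of H and R
  have hHsym : ∀ x y : V, (inner ℂ (H x) y : ℂ) = inner ℂ x (H y) := by
    intro x y
    nth_rewrite 1 [← hH.adjoint_eq]
    exact ContinuousLinearMap.adjoint_inner_left H y x
  have hRsym : ∀ x y : V, (inner ℂ (R x) y : ℂ) = inner ℂ x (R y) := by
    intro x y
    nth_rewrite 1 [← hR.adjoint_eq]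
    exact ContinuousLinearMap.adjoint_inner_left R y x
  -- K ⊆ Ψ^⊥
  have hKperp : ∀ x ∈ K, (inner ℂ Ψ x : ℂ) = 0 := by
    have hle := hKmin (ℂ ∙ Ψ)ᗮ (Submodule.isClosed_orthogonal _)
      (Submodule.mem_orthogonal_singleton_iff_inner_right.mpr hA)
      (Submodule.mem_orthogonal_singleton_iff_inner_right.mpr hA')
      (by
        intro x hx
        rw [Submodule.mem_orthogonal_singleton_iff_inner_right] at hx ⊢
        rw [← hHsym Ψ x, hground, inner_smul_left, hx, mul_zero])
    intro x hx
    exact Submodule.mem_orthogonal_singleton_iff_inner_right.mp (hle hx)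
  -- ε ≥ 0
  have hε0 : 0 ≤ ε := by
    apply hε.2
    rintro r ⟨x, -, hnx, rfl⟩
    have := hpos x
    rw [hnx] at this
    simpa using this
  -- spectral bound on K
  have hspec : ∀ x ∈ K, ε * ‖x‖ ^ 2 ≤ ((inner ℂ x (H x) : ℂ)).re - E * ‖x‖ ^ 2 := by
    intro x hx
    rcases eq_or_ne x 0 with rfl | hx0
    · simp
    · have hxn : (0:ℝ) < ‖x‖ := norm_pos_iff.mpr hx0
      set c : ℝ := ‖x‖⁻¹ with hc
      have hmem : ((c : ℂ) • x) ∈ K := K.smul_mem _ hx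
      have hnc : ‖(c : ℂ) • x‖ = 1 := by
        rw [norm_smul]
        simp [hc, abs_of_pos (inv_pos.mpr hxn), inv_mul_cancel₀ (ne_of_gt hxn)]
      have h1 : ε ≤ ((inner ℂ ((c:ℂ) • x) (H ((c:ℂ) • x)) : ℂ)).re - E :=
        hε.1 ⟨_, hmem, hnc, rfl⟩
      have h2 : (inner ℂ ((c:ℂ) • x) (H ((c:ℂ) • x)) : ℂ) = ((c^2 : ℝ) : ℂ) * inner ℂ x (H x) := by
        rw [map_smul, inner_smul_left, inner_smul_right, Complex.conj_ofReal]
        push_cast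
        ring
      rw [h2, Complex.re_ofReal_mul] at h1
      have hcc : c ^ 2 * ‖x‖ ^ 2 = 1 := by
        rw [hc, inv_pow, inv_mul_cancel₀ (by positivity)]
      have h3 := mul_le_mul_of_nonneg_right h1 (sq_nonneg ‖x‖)
      have h4 : c ^ 2 * ((inner ℂ x (H x) : ℂ)).re * ‖x‖ ^ 2 = ((inner ℂ x (H x) : ℂ)).re := by
        rw [mul_comm (c ^ 2) _, mul_assoc, hcc, mul_one]
      nlinarith [h3, h4]
  -- kernel of H - E is spanned by Ψ
  have hker : ∀ v : V, H v = (E : ℂ) • v → v = (inner ℂ Ψ v : ℂ) • Ψ := by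
    intro v hv
    set w := v - (inner ℂ Ψ v : ℂ) • Ψ with hw
    have hHw : H w = (E : ℂ) • w := by
      rw [hw, map_sub, map_smul, hv, hground, smul_sub, smul_smul, smul_smul, mul_comm]
    have hres := hRres v
    have hwres : w = H (R v) - (E : ℂ) • (R v) := by
      rw [hw, ← hres]
      simp [ContinuousLinearMap.sub_apply, ContinuousLinearMap.smul_apply,
        ContinuousLinearMap.one_apply]
    have hww : (inner ℂ w w : ℂ) = 0 := by
      calc (inner ℂ w w : ℂ) = inner ℂ w (H (R v)) - (E : ℂ) * inner ℂ w (R v) := by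
            rw [← inner_smul_right]
            rw [← inner_sub_right, ← hwres]
        _ = inner ℂ (H w) (R v) - (E : ℂ) * inner ℂ w (R v) := by rw [hHsym]
        _ = 0 := by
            rw [hHw, inner_smul_left, Complex.conj_ofReal, sub_self]
    have hw0 : w = 0 := inner_self_eq_zero.mp hww
    have : v - (inner ℂ Ψ v : ℂ) • Ψ = 0 := hw0
    linear_combination (norm := module) this
  -- the resolvent applied to Ψ-orthogonal vectors
  have hresK : ∀ φ ∈ K, H (R φ) - (E : ℂ) • R φ = φ := by
    intro φ hφ
    have h0 := hRres φ
    rw [hKperp φ hφ, zero_smul, sub_zero] at h0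
    simpa [ContinuousLinearMap.sub_apply, ContinuousLinearMap.smul_apply,
      ContinuousLinearMap.one_apply] using h0
  have hRΨperp : ∀ φ : V, (inner ℂ Ψ (R φ) : ℂ) = 0 := by
    intro φ
    rw [← hRsym, hRΨ, inner_zero_left]
  -- R preserves K
  have hRK : ∀ φ ∈ K, R φ ∈ K := by
    intro φ hφ
    obtain ⟨u₁, hu₁, u₂, hu₂, hdecomp⟩ := K.exists_add_mem_mem_orthogonal (R φ)
    have hHinv' : ∀ z ∈ Kᗮ, H z ∈ Kᗮ := by
      intro z hz
      rw [Submodule.mem_orthogonal]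
      intro x hxK
      rw [← hHsym x z]
      exact Submodule.inner_right_of_mem_orthogonal (hKinv x hxK) hz
    set z := H u₂ - (E : ℂ) • u₂ with hz
    have hzK : z ∈ K := by
      have h1 : z = φ - (H u₁ - (E : ℂ) • u₁) := by
        have := hresK φ hφ
        rw [hdecomp, map_add, smul_add] at this
        rw [hz, ← this]
        abel
      rw [h1]
      exact K.sub_mem hφ (K.sub_mem (hKinv u₁ hu₁) (K.smul_mem _ hu₁))
    have hzKp : z ∈ Kᗮ := Kᗮ.sub_mem (hHinv' u₂ hu₂) (Kᗮ.smul_mem _ hu₂)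
    have hz0 : z = 0 := by
      have := Submodule.inner_right_of_mem_orthogonal hzK hzKp
      exact inner_self_eq_zero.mp this
    have hu₂eq : u₂ = (inner ℂ Ψ u₂ : ℂ) • Ψ := by
      apply hker
      have : H u₂ - (E : ℂ) • u₂ = 0 := hz0
      linear_combination (norm := module) this
    have hΨu₂ : (inner ℂ Ψ u₂ : ℂ) = 0 := by
      have h1 : (inner ℂ Ψ u₂ : ℂ) = inner ℂ Ψ (R φ) - inner ℂ Ψ u₁ := by
        rw [hdecomp, inner_add_right]
        ring
      rw [h1, hRΨperp, hKperp u₁ hu₁, sub_zero]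
    have : u₂ = 0 := by rw [hu₂eq, hΨu₂, zero_smul]
    rw [hdecomp, this, add_zero]
    exact hu₁
  -- the key inequality, for each φ ∈ K
  have key : ∀ φ ∈ K, ε ^ 2 * ((inner ℂ φ (R φ) : ℂ)).re ≤
      ((inner ℂ φ (H φ) : ℂ)).re - E * ‖φ‖ ^ 2 := by
    intro φ hφ
    set u := R φ with hu
    have huK : u ∈ K := hRK φ hφ
    have hres : H u - (E : ℂ) • u = φ := hresK φ hφ
    -- a := re ⟪φ, Rφ⟫ equals re⟪u,Hu⟫ - E‖u‖²
    have ha : ((inner ℂ φ u : ℂ)).re = ((inner ℂ u (H u) : ℂ)).re - E * ‖u‖ ^ 2 := by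
      have h1 : (inner ℂ u φ : ℂ) = inner ℂ u (H u) - (E : ℂ) * inner ℂ u u := by
        rw [← hres, inner_sub_right, inner_smul_right]
      have h2 : ((inner ℂ φ u : ℂ)).re = ((inner ℂ u φ : ℂ)).re := by
        rw [← inner_conj_symm u φ]
        exact Complex.conj_re _
      rw [h2, h1, Complex.sub_re, Complex.re_ofReal_mul, inner_self_eq_norm_sq_to_K]
      norm_num [← Complex.ofReal_pow]
    have h1 : ε * ‖u‖ ^ 2 ≤ ((inner ℂ φ u : ℂ)).re := by
      rw [ha]; exact hspec u huK
    have h2 : ((inner ℂ φ u : ℂ)).re ≤ ‖u‖ * ‖φ‖ := by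
      calc ((inner ℂ φ u : ℂ)).re ≤ ‖(inner ℂ φ u : ℂ)‖ := Complex.re_le_norm _
        _ = ‖(inner ℂ φ u : ℂ)‖ := rfl
        _ ≤ ‖φ‖ * ‖u‖ := norm_inner_le_norm _ _
        _ = ‖u‖ * ‖φ‖ := mul_comm _ _
    have h3 : ε * ‖φ‖ ^ 2 ≤ ((inner ℂ φ (H φ) : ℂ)).re - E * ‖φ‖ ^ 2 := hspec φ hφ
    have hb0 : 0 ≤ ((inner ℂ φ (H φ) : ℂ)).re - E * ‖φ‖ ^ 2 := hpos φ
    rcases eq_or_lt_of_le (norm_nonneg u) with h0 | h0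
    · have hu0 : u = 0 := norm_eq_zero.mp h0.symm
      rw [hu0, inner_zero_right]
      simpa using hb0
    · have h4 : ε * ‖u‖ ≤ ‖φ‖ := by nlinarith
      nlinarith [mul_le_mul_of_nonneg_right h4 (mul_nonneg hε0 (norm_nonneg φ)),
        mul_le_mul_of_nonneg_left h2 (mul_nonneg hε0 hε0), norm_nonneg φ, norm_nonneg u]
  -- identify the denominator
  have hden1 : (inner ℂ Ψ (((adjoint A) * R * A) Ψ) : ℂ) = inner ℂ (A Ψ) (R (A Ψ)) := by
    simp only [ContinuousLinearMap.mul_apply]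
    rw [ContinuousLinearMap.adjoint_inner_right]
  have hden2 : (inner ℂ Ψ ((A * R * (adjoint A)) Ψ) : ℂ) =
      inner ℂ ((adjoint A) Ψ) (R ((adjoint A) Ψ)) := by
    simp only [ContinuousLinearMap.mul_apply]
    exact (ContinuousLinearMap.adjoint_inner_left A (R ((adjoint A) Ψ)) Ψ).symm
  -- identify the numerator
  have hnum : ((inner ℂ Ψ (((adjoint A) * (H * A - A * H) - (H * A - A * H) * (adjoint A)) Ψ) : ℂ)).re
      = (((inner ℂ (A Ψ) (H (A Ψ)) : ℂ)).re - E * ‖A Ψ‖ ^ 2)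
        + (((inner ℂ ((adjoint A) Ψ) (H ((adjoint A) Ψ)) : ℂ)).re - E * ‖(adjoint A) Ψ‖ ^ 2) := by
    have e1 : (inner ℂ Ψ ((adjoint A) (H (A Ψ))) : ℂ) = inner ℂ (A Ψ) (H (A Ψ)) :=
      ContinuousLinearMap.adjoint_inner_right A _ _
    have e2 : (inner ℂ Ψ ((adjoint A) (A (H Ψ))) : ℂ) = (E : ℂ) * inner ℂ (A Ψ) (A Ψ) := by
      rw [ContinuousLinearMap.adjoint_inner_right A, hground, map_smul, inner_smul_right]
    have e3 : (inner ℂ Ψ (H (A ((adjoint A) Ψ))) : ℂ) =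
        (E : ℂ) * inner ℂ ((adjoint A) Ψ) ((adjoint A) Ψ) := by
      rw [← hHsym, hground, inner_smul_left, Complex.conj_ofReal]
      congr 1
      exact (ContinuousLinearMap.adjoint_inner_left A ((adjoint A) Ψ) Ψ).symm
    have e4 : (inner ℂ Ψ (A (H ((adjoint A) Ψ))) : ℂ) = inner ℂ ((adjoint A) Ψ) (H ((adjoint A) Ψ)) :=
      (ContinuousLinearMap.adjoint_inner_left A (H ((adjoint A) Ψ)) Ψ).symm
    have expand : ((inner ℂ Ψ (((adjoint A) * (H * A - A * H) - (H * A - A * H) * (adjoint A)) Ψ) : ℂ))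
        = inner ℂ (A Ψ) (H (A Ψ)) - (E : ℂ) * inner ℂ (A Ψ) (A Ψ)
          - ((E : ℂ) * inner ℂ ((adjoint A) Ψ) ((adjoint A) Ψ)
            - inner ℂ ((adjoint A) Ψ) (H ((adjoint A) Ψ))) := by
      simp only [ContinuousLinearMap.sub_apply, ContinuousLinearMap.mul_apply, map_sub,
        inner_sub_right]
      rw [e1, e2, e3, e4]
    have hself : ∀ w : V, ((inner ℂ w w : ℂ)).re = ‖w‖ ^ 2 := fun w => by
      have := @inner_self_eq_norm_sq ℂ V _ _ _ w
      simpa using this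
    rw [expand]
    simp only [Complex.sub_re, Complex.re_ofReal_mul, hself]
    ring
  -- conclude
  rw [le_div_iff₀ hden]
  rw [Complex.add_re, hnum, hden1, hden2]
  have k1 := key (A Ψ) hKA
  have k2 := key ((adjoint A) Ψ) hKA'
  nlinarith [k1, k2]
end

section
/- (Triple commutator bound) With H, Ψ, E, ε as above, ε² ≤ ⟨[[A*,H],[H,[H,A]]]⟩ / ⟨[A*,[H,A]]⟩, assuming the denominator is positive. -/
open ContinuousLinearMap

/-- Triple commutator bound: with `H` self-adjoint, `HΨ = EΨ`, `H − E ≥ 0`, and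
`ε = inf spec(H|_K) − E` where `K` is the smallest closed `H`-invariant subspace
containing `AΨ` and `A*Ψ`, one has
`ε² ≤ ⟨[[A*,H],[H,[H,A]]]⟩ / ⟨[A*,[H,A]]⟩` when the denominator is positive. -/
theorem stmt_13 {V : Type*} [NormedAddCommGroup V] [InnerProductSpace ℂ V]
    [CompleteSpace V] (H A : V →L[ℂ] V) (hH : IsSelfAdjoint H) (E ε : ℝ)
    (Ψ : V) (hΨ : ‖Ψ‖ = 1) (hground : H Ψ = (E : ℂ) • Ψ)
    (hpos : ∀ x : V, 0 ≤ ((inner ℂ x (H x) : ℂ)).re - E * ‖x‖ ^ 2)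
    (K : Submodule ℂ V) (hKclosed : IsClosed (K : Set V))
    (hKA : A Ψ ∈ K) (hKA' : (adjoint A) Ψ ∈ K) (hKinv : ∀ x ∈ K, H x ∈ K)
    (hKmin : ∀ K' : Submodule ℂ V, IsClosed (K' : Set V) → A Ψ ∈ K' →
      (adjoint A) Ψ ∈ K' → (∀ x ∈ K', H x ∈ K') → K ≤ K')
    (hε : IsGLB {r : ℝ | ∃ x ∈ K, ‖x‖ = 1 ∧ r = ((inner ℂ x (H x) : ℂ)).re - E} ε)
    (hden : 0 < ((inner ℂ Ψ (((adjoint A) * (H * A - A * H) -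
      (H * A - A * H) * (adjoint A)) Ψ) : ℂ)).re) :
    ε ^ 2 ≤
      ((inner ℂ Ψ ((((adjoint A) * H - H * (adjoint A)) *
          (H * (H * A - A * H) - (H * A - A * H) * H) -
          (H * (H * A - A * H) - (H * A - A * H) * H) *
          ((adjoint A) * H - H * (adjoint A))) Ψ) : ℂ)).re /
      ((inner ℂ Ψ (((adjoint A) * (H * A - A * H) -
        (H * A - A * H) * (adjoint A)) Ψ) : ℂ)).re := by
  have hsym : ∀ x y : V, (inner ℂ (H x) y : ℂ) = inner ℂ x (H y) := fun x y => hH.isSymmetric x y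
  set u := A Ψ with hu
  set v := adjoint A Ψ with hv
  have hA1 : ∀ x : V, (inner ℂ Ψ (adjoint A x) : ℂ) = inner ℂ u x := fun x =>
    adjoint_inner_right A Ψ x
  have hA2 : ∀ x : V, (inner ℂ Ψ (A x) : ℂ) = inner ℂ v x := fun x =>
    (adjoint_inner_left A x Ψ).symm
  have hH1 : ∀ x : V, (inner ℂ Ψ (H x) : ℂ) = (E:ℂ) * inner ℂ Ψ x := by
    intro x
    rw [← hsym, hground, inner_smul_left, Complex.conj_ofReal]
  set B : V →L[ℂ] V := H - (E:ℂ) • 1 with hBdef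
  have hBapp : ∀ x : V, B x = H x - (E:ℂ) • x := by
    intro x; simp [hBdef, sub_apply, smul_apply, one_apply]
  -- symmetry of B
  have hBsym : ∀ x y : V, (inner ℂ (B x) y : ℂ) = inner ℂ x (B y) := by
    intro x y
    simp only [hBapp, inner_sub_left, inner_sub_right, inner_smul_left, inner_smul_right,
      Complex.conj_ofReal, hsym]
  -- re of ⟨x, Bx⟩
  have hqB : ∀ x : V, ((inner ℂ x (B x) : ℂ)).re = ((inner ℂ x (H x) : ℂ)).re - E * ‖x‖ ^ 2 := by
    intro x
    rw [hBapp, inner_sub_right, inner_smul_right, inner_self_eq_norm_sq_to_K]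
    simp [Complex.sub_re, ← Complex.ofReal_pow, ← Complex.ofReal_mul]
  have hBnn : ∀ x : V, 0 ≤ ((inner ℂ x (B x) : ℂ)).re := fun x => by rw [hqB]; exact hpos x
  have hBK : ∀ x ∈ K, B x ∈ K := by
    intro x hx
    rw [hBapp]
    exact K.sub_mem (hKinv x hx) (K.smul_mem _ hx)
  -- lower bound on K
  have hεB : ∀ x ∈ K, ε * ‖x‖ ^ 2 ≤ ((inner ℂ x (B x) : ℂ)).re := by
    intro x hx
    rcases eq_or_ne x 0 with rfl | hx0
    · simpa using hBnn 0
    · have hn : 0 < ‖x‖ := norm_pos_iff.mpr hx0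
      set c : ℂ := ((‖x‖⁻¹ : ℝ) : ℂ) with hc
      have hy1 : ‖c • x‖ = 1 := by
        rw [norm_smul, hc, Complex.norm_real, Real.norm_eq_abs, abs_of_pos (by positivity)]
        field_simp
      have hmem : c • x ∈ K := K.smul_mem _ hx
      have hle : ε ≤ ((inner ℂ (c • x) (H (c • x)) : ℂ)).re - E := hε.1 ⟨c • x, hmem, hy1, rfl⟩
      have hinner : ((inner ℂ (c • x) (H (c • x)) : ℂ)).re = (‖x‖ ^ 2)⁻¹ * ((inner ℂ x (H x) : ℂ)).re := by
        rw [map_smul, inner_smul_left, inner_smul_right, hc, Complex.conj_ofReal,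
          ← mul_assoc, ← Complex.ofReal_mul, Complex.re_ofReal_mul]
        congr 1
        rw [pow_two, mul_inv]
      rw [hqB]
      rw [hinner] at hle
      have h2 : 0 < ‖x‖ ^ 2 := by positivity
      have := mul_le_mul_of_nonneg_left hle (le_of_lt h2)
      calc ε * ‖x‖ ^ 2 = ‖x‖ ^ 2 * ε := by ring
        _ ≤ ‖x‖ ^ 2 * ((‖x‖ ^ 2)⁻¹ * ((inner ℂ x (H x) : ℂ)).re - E) := this
        _ = ((inner ℂ x (H x) : ℂ)).re - E * ‖x‖ ^ 2 := by field_simp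
  have hε0 : 0 ≤ ε := by
    apply hε.2
    rintro r ⟨x, hxK, hx1, rfl⟩
    have := hpos x
    simpa [hx1] using this
  -- key lemma
  have key : ∀ x ∈ K, ε ^ 2 * ((inner ℂ x (B x) : ℂ)).re ≤ ((inner ℂ x (B (B (B x))) : ℂ)).re := by
    intro x hx
    have hw : B x ∈ K := hBK x hx
    have hgoal_eq : ((inner ℂ x (B (B (B x))) : ℂ)).re = ((inner ℂ (B x) (B (B x)) : ℂ)).re := by
      rw [hBsym x (B (B x))]
    rw [hgoal_eq]
    set a := ((inner ℂ x (B x) : ℂ)).re with ha'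
    set b := ((inner ℂ (B x) (B (B x)) : ℂ)).re with hb'
    have h1 : ε * ‖x‖ ^ 2 ≤ a := hεB x hx
    have h2 : ε * ‖B x‖ ^ 2 ≤ b := hεB _ hw
    have h3 : a ≤ ‖x‖ * ‖B x‖ := by
      calc a ≤ ‖(inner ℂ x (B x) : ℂ)‖ := Complex.re_le_norm _
        _ = ‖(inner ℂ x (B x) : ℂ)‖ := rfl
        _ ≤ ‖x‖ * ‖B x‖ := norm_inner_le_norm _ _
    have ha : 0 ≤ a := hBnn x
    have hb : 0 ≤ b := hBnn (B x)
    rcases eq_or_lt_of_le ha with h0 | hpos'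
    · rw [← h0]; simpa using hb
    · -- ε² a² ≤ a b then divide
      have hnm : 0 ≤ ‖x‖ * ‖B x‖ := mul_nonneg (norm_nonneg _) (norm_nonneg _)
      have hsq : a * a ≤ (‖x‖ * ‖B x‖) * (‖x‖ * ‖B x‖) := mul_le_mul h3 h3 ha hnm
      have e1 : ε * (a * a) ≤ a * ‖B x‖ ^ 2 := by
        nlinarith [mul_le_mul_of_nonneg_left hsq hε0,
          mul_le_mul_of_nonneg_right h1 (sq_nonneg ‖B x‖)]
      have step : ε ^ 2 * a * a ≤ b * a := by
        nlinarith [mul_le_mul_of_nonneg_left e1 hε0,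
          mul_le_mul_of_nonneg_right h2 (le_of_lt hpos')]
      exact le_of_mul_le_mul_right step hpos'
  -- algebra: denominator
  have hden_eq : (inner ℂ Ψ (((adjoint A) * (H * A - A * H) -
      (H * A - A * H) * (adjoint A)) Ψ) : ℂ) = inner ℂ u (B u) + inner ℂ v (B v) := by
    simp only [mul_apply_eq_comp, sub_apply, map_sub, map_smul, hground, inner_sub_right,
      inner_smul_right, hA1, hA2, hH1, hBapp]
    ring
  have hnum_eq : (inner ℂ Ψ ((((adjoint A) * H - H * (adjoint A)) *
          (H * (H * A - A * H) - (H * A - A * H) * H) -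
          (H * (H * A - A * H) - (H * A - A * H) * H) *
          ((adjoint A) * H - H * (adjoint A))) Ψ) : ℂ)
      = inner ℂ u (B (B (B u))) + inner ℂ v (B (B (B v))) := by
    simp only [mul_apply_eq_comp, sub_apply, map_sub, map_smul, hground, inner_sub_right,
      inner_smul_right, hA1, hA2, hH1, hBapp]
    ring
  rw [le_div_iff₀ hden, hden_eq, hnum_eq, Complex.add_re, Complex.add_re, mul_add]
  exact add_le_add (key u hKA) (key v hKA')
end
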